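/- Let k be a field, let d₁, d₂ ∈ k with d₁ ≠ 0, and let A be the 2-dimensional k-vector space with basis {x, y} and the k-bilinear multiplication determined by x² = 0, xy = −d₂x − (d₂²/d₁)y, yx = 0, y² = d₁x + d₂y. Then (a·b)·c = 0 for all a, b, c ∈ A; consequently, together with the zero comultiplication Δ = 0, A is a self-distributive bialgebra. -/

import Mathlib

/-- The 2-dimensional algebra with basis `{x, y}`, `d₁ ≠ 0`, and
multiplication `x² = 0, xy = −d₂•x − (d₂²/d₁)•y, yx = 0, y² = d₁•x + d₂•y`
satisfies `(a·b)·c = 0` for all `a, b, c`; hence with zero comultiplication it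
is a self-distributive bialgebra. -/
theorem stmt_12 (k A : Type*) [Field k] (d₁ d₂ : k) (hd₁ : d₁ ≠ 0)
    [NonUnitalNonAssocRing A] [Module k A]
    [SMulCommClass k A A] [IsScalarTower k A A]
    (B : Module.Basis (Fin 2) k A) (x y : A) (hx : x = B 0) (hy : y = B 1)
    (hxx : x * x = 0) (hxy : x * y = (-d₂) • x - (d₂ ^ 2 / d₁) • y)
    (hyx : y * x = 0) (hyy : y * y = d₁ • x + d₂ • y) :
    ∀ a b c : A, (a * b) * c = 0 := by
  have hrepr : ∀ a : A, a = (B.repr a 0) • x + (B.repr a 1) • y := by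
    intro a
    conv_lhs => rw [← B.sum_repr a]
    rw [Fin.sum_univ_two, hx, hy]
  intro a b c
  rw [hrepr a, hrepr b, hrepr c]
  simp only [add_mul, mul_add, smul_mul_assoc, mul_smul_comm, hxx, hxy, hyx, hyy,
    smul_add, smul_sub, smul_smul, smul_zero, zero_mul, sub_mul]
  match_scalars <;> field_simp <;> ring
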